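/- arXiv:2107.03745 — 2 statements merged into one kernel-verified Lean document; each statement's English description precedes it below -/
import Mathlib

section
/- The set Λ = {(z₁,z₂,z₃) ∈ O³ : z₁ ≡ z₂ ≡ z₃ mod α, z₁+z₂+z₃ ≡ 0 mod ᾱ} is a free O-module of rank 3, generated by e₁ = (0,α,α), e₂ = (0,0,2), e₃ = (1,1,ᾱ), where O = Z[α], α = (1+i√7)/2 and ᾱ = (1-i√7)/2. -/
noncomputable section

/-- `α = (1+i√7)/2`. -/
def Kalpha : ℂ := (1 + Complex.I * Real.sqrt 7) / 2

/-- `ᾱ = (1-i√7)/2`. -/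
def Kalphabar : ℂ := (1 - Complex.I * Real.sqrt 7) / 2

/-- Membership in the ring `𝒪 = ℤ[α] = ℤ + ℤα`. -/
def inO (z : ℂ) : Prop := ∃ m n : ℤ, z = (m : ℂ) + (n : ℂ) * Kalpha

def Ke1 : Fin 3 → ℂ := ![0, Kalpha, Kalpha]
def Ke2 : Fin 3 → ℂ := ![0, 0, 2]
def Ke3 : Fin 3 → ℂ := ![1, 1, Kalphabar]

lemma Kbar_eq : Kalphabar = 1 - Kalpha := by
  unfold Kalpha Kalphabar; ring

lemma Ksq7 : (Real.sqrt 7 : ℂ) * (Real.sqrt 7 : ℂ) = 7 := by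
  rw [← Complex.ofReal_mul, Real.mul_self_sqrt (by norm_num)]
  norm_num

lemma Kalpha_sq : Kalpha * Kalpha = Kalpha - 2 := by
  have h := Ksq7
  have hI := Complex.I_mul_I
  unfold Kalpha
  linear_combination ((Real.sqrt 7 : ℂ) * (Real.sqrt 7 : ℂ) / 4) * hI - (1/4 : ℂ) * h

lemma Kalpha_ne_zero : Kalpha ≠ 0 := by
  intro h
  have h2 := Kalpha_sq
  rw [h] at h2
  simp only [mul_zero, zero_sub] at h2
  exact absurd h2.symm (by norm_num)

lemma inO_intcast (k : ℤ) : inO (k : ℂ) := ⟨k, 0, by push_cast; ring⟩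

lemma inO_two : inO (2 : ℂ) := ⟨2, 0, by push_cast; ring⟩

lemma inO_alpha : inO Kalpha := ⟨0, 1, by push_cast; ring⟩

lemma inO_one_sub_alpha : inO (1 - Kalpha) := ⟨1, -1, by push_cast; ring⟩

lemma inO_alpha_sub_two : inO (Kalpha - 2) := ⟨-2, 1, by push_cast; ring⟩

lemma inO_alpha_add_one : inO (Kalpha + 1) := ⟨1, 1, by push_cast; ring⟩

lemma inO.add {x y : ℂ} (hx : inO x) (hy : inO y) : inO (x + y) := by
  obtain ⟨m, n, rfl⟩ := hx
  obtain ⟨p, q, rfl⟩ := hy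
  exact ⟨m + p, n + q, by push_cast; ring⟩

lemma inO.neg {x : ℂ} (hx : inO x) : inO (-x) := by
  obtain ⟨m, n, rfl⟩ := hx
  exact ⟨-m, -n, by push_cast; ring⟩

lemma inO.sub {x y : ℂ} (hx : inO x) (hy : inO y) : inO (x - y) := by
  simpa [sub_eq_add_neg] using hx.add hy.neg

lemma inO.mul {x y : ℂ} (hx : inO x) (hy : inO y) : inO (x * y) := by
  obtain ⟨m, n, rfl⟩ := hx
  obtain ⟨p, q, rfl⟩ := hy
  refine ⟨m * p - 2 * (n * q), m * q + n * p + n * q, ?_⟩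
  push_cast
  linear_combination ((n : ℂ) * q) * Kalpha_sq

lemma vec3_ext {w v : Fin 3 → ℂ} (h0 : w 0 = v 0) (h1 : w 1 = v 1)
    (h2 : w 2 = v 2) : w = v := by
  funext i
  fin_cases i
  exacts [h0, h1, h2]

/-- `Λ = {z ∈ 𝒪³ : z₁ ≡ z₂ ≡ z₃ mod α, z₁+z₂+z₃ ≡ 0 mod ᾱ}` is the free
`𝒪`-module with basis `e₁, e₂, e₃`: every element of `Λ` has a unique
representation as an `𝒪`-linear combination of `e₁, e₂, e₃`, and conversely
every such combination lies in `Λ`. -/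
theorem lattice_free_rank_three_over_O :
    ∀ z : Fin 3 → ℂ,
      ((∀ i, inO (z i)) ∧
        (∃ t, inO t ∧ z 0 - z 1 = Kalpha * t) ∧
        (∃ t, inO t ∧ z 1 - z 2 = Kalpha * t) ∧
        (∃ s, inO s ∧ z 0 + z 1 + z 2 = Kalphabar * s)) ↔
      (∃! c : Fin 3 → ℂ, (∀ i, inO (c i)) ∧
        z = c 0 • Ke1 + c 1 • Ke2 + c 2 • Ke3) := by
  intro z
  have hsq := Kalpha_sq
  have hbar := Kbar_eq
  constructor
  · rintro ⟨hz, ⟨t1, ht1O, ht1⟩, ⟨t2, ht2O, ht2⟩, ⟨s, hsO, hs⟩⟩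
    rw [hbar] at hs
    refine ⟨![-t1, s - 2 * t1 - t2 + (1 - Kalpha) * z 0 - z 1, z 0], ⟨?_, ?_⟩, ?_⟩
    · intro i
      fin_cases i
      · simpa using ht1O.neg
      · simpa using ((((hsO.sub (inO_two.mul ht1O)).sub ht2O).add
          (inO_one_sub_alpha.mul (hz 0))).sub (hz 1))
      · simpa using hz 0
    · refine vec3_ext ?_ ?_ ?_
      · simp only [Ke1, Ke2, Ke3, Pi.add_apply, Pi.smul_apply, smul_eq_mul,
          Fin.isValue, Matrix.cons_val_zero, Matrix.cons_val_one, Matrix.head_cons,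
          Matrix.cons_val_two, Matrix.tail_cons]
        ring
      · simp only [Ke1, Ke2, Ke3, Pi.add_apply, Pi.smul_apply, smul_eq_mul,
          Fin.isValue, Matrix.cons_val_zero, Matrix.cons_val_one, Matrix.head_cons,
          Matrix.cons_val_two, Matrix.tail_cons]
        linear_combination -ht1
      · simp only [Ke1, Ke2, Ke3, Pi.add_apply, Pi.smul_apply, smul_eq_mul,
          Fin.isValue, Matrix.cons_val_zero, Matrix.cons_val_one, Matrix.head_cons,
          Matrix.cons_val_two, Matrix.tail_cons]
        rw [hbar]
        linear_combination (2 * Kalpha - 3) * ht1 + (Kalpha - 1) * ht2 +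
          Kalpha * hs + (2 * t1 + t2 - s) * hsq
    · rintro c ⟨hcO, hc⟩
      have h0 := congrFun hc 0
      have h1 := congrFun hc 1
      have h2 := congrFun hc 2
      simp only [Ke1, Ke2, Ke3, Pi.add_apply, Pi.smul_apply, smul_eq_mul,
        Fin.isValue, Matrix.cons_val_zero, Matrix.cons_val_one, Matrix.head_cons,
        Matrix.cons_val_two, Matrix.tail_cons] at h0 h1 h2
      rw [hbar] at h2
      have hc0 : c 0 = -t1 := by
        have hz0 : Kalpha * (c 0 + t1) = 0 := by linear_combination -h1 - ht1 + h0
        rcases mul_eq_zero.1 hz0 with h | h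
        · exact absurd h Kalpha_ne_zero
        · exact eq_neg_of_add_eq_zero_left h
      have hc2 : c 2 = z 0 := by linear_combination -h0
      have hc1 : c 1 = s - 2 * t1 - t2 + (1 - Kalpha) * z 0 - z 1 := by
        rw [hc0, hc2] at h2
        linear_combination (-1/2 : ℂ) * h2 + (Kalpha - 3/2) * ht1 +
          ((Kalpha - 1)/2) * ht2 + (Kalpha/2) * hs + (t1 + t2/2 - s/2) * hsq
      refine vec3_ext ?_ ?_ ?_
      · simpa using hc0
      · simpa using hc1
      · simpa using hc2
  · rintro ⟨c, ⟨hcO, hc⟩, _⟩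
    have h0 := congrFun hc 0
    have h1 := congrFun hc 1
    have h2 := congrFun hc 2
    simp only [Ke1, Ke2, Ke3, Pi.add_apply, Pi.smul_apply, smul_eq_mul,
      Fin.isValue, Matrix.cons_val_zero, Matrix.cons_val_one, Matrix.head_cons,
      Matrix.cons_val_two, Matrix.tail_cons] at h0 h1 h2
    rw [hbar] at h2
    have hz0 : z 0 = c 2 := by linear_combination h0
    have hz1 : z 1 = c 0 * Kalpha + c 2 := by linear_combination h1
    refine ⟨?_, ⟨-c 0, (hcO 0).neg, ?_⟩, ⟨c 2 - (1 - Kalpha) * c 1,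
      (hcO 2).sub (inO_one_sub_alpha.mul (hcO 1)), ?_⟩,
      ⟨(Kalpha - 2) * c 0 + Kalpha * c 1 + (Kalpha + 1) * c 2,
        ((inO_alpha_sub_two.mul (hcO 0)).add (inO_alpha.mul (hcO 1))).add
          (inO_alpha_add_one.mul (hcO 2)), ?_⟩⟩
    · intro i
      fin_cases i
      · simpa [hz0] using hcO 2
      · rw [show z ((⟨1, by norm_num⟩ : Fin 3)) = z 1 from rfl, hz1]
        exact ((hcO 0).mul inO_alpha).add (hcO 2)
      · rw [show z ((⟨2, by norm_num⟩ : Fin 3)) = z 2 from rfl, h2]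
        exact (((hcO 0).mul inO_alpha).add ((hcO 1).mul inO_two)).add
          ((hcO 2).mul inO_one_sub_alpha)
    · linear_combination h0 - h1
    · linear_combination h1 - h2 - c 1 * hsq
    · rw [hbar]
      linear_combination h0 + h1 + h2 + (c 0 + c 1 + c 2) * hsq
end
end

section
/- The matrix r₁r₂r₃, where r₁, r₂, r₃ are the generators of the reflection group G₃₃₆, satisfies (r₁r₂r₃)⁷ = −id, hence r₁r₂r₃ has order 14 in GL(3,C). -/
noncomputable section

def r1 : Matrix (Fin 3) (Fin 3) ℂ := !![1,0,0; 0,0,1; 0,1,0]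
def r2 : Matrix (Fin 3) (Fin 3) ℂ := !![1,0,0; 0,1,0; 0,0,-1]
def r3 : Matrix (Fin 3) (Fin 3) ℂ :=
  (1/2 : ℂ) • !![1,-1,-Kalpha; -1,1,-Kalpha; -Kalphabar,-Kalphabar,0]

def X : ℂ := Complex.I * Real.sqrt 7

lemma hX : X ^ 2 = -7 := by
  have h7 : ((Real.sqrt 7 : ℝ) : ℂ) ^ 2 = 7 := by
    norm_cast
    rw [Real.sq_sqrt]
    norm_num
  rw [X, mul_pow, Complex.I_sq, h7]
  ring

def A1 : Matrix (Fin 3) (Fin 3) ℂ :=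
  !![((1/2)), ((-1/2)), ((-1/4) + (-1/4)*X);
    ((1/4) + (-1/4)*X), ((1/4) + (-1/4)*X), ((0));
    ((-1/2)), ((1/2)), ((-1/4) + (-1/4)*X)]

def A2 : Matrix (Fin 3) (Fin 3) ℂ :=
  !![((1/4) + (1/4)*X), ((-1/2)), ((-1/2));
    ((-1/4) + (-1/4)*X), ((-1/2)), ((-1/2));
    ((0)), ((1/4) + (-1/4)*X), ((-1/4) + (1/4)*X)]

def A3 : Matrix (Fin 3) (Fin 3) ℂ :=
  !![((1/4) + (1/4)*X), ((-1/2)), ((1/2));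
    ((0)), ((-1/4) + (1/4)*X), ((-1/4) + (1/4)*X);
    ((-1/4) + (-1/4)*X), ((-1/2)), ((1/2))]

def A4 : Matrix (Fin 3) (Fin 3) ℂ :=
  !![((-1/4) + (1/4)*X), ((0)), ((1/4) + (-1/4)*X);
    ((1/2)), ((1/4) + (1/4)*X), ((1/2));
    ((-1/2)), ((1/4) + (1/4)*X), ((-1/2))]

def A5 : Matrix (Fin 3) (Fin 3) ℂ :=
  !![((-1/4) + (1/4)*X), ((1/4) + (-1/4)*X), ((0));
    ((1/2)), ((1/2)), ((-1/4) + (-1/4)*X);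
    ((1/2)), ((1/2)), ((1/4) + (1/4)*X)]

def A6 : Matrix (Fin 3) (Fin 3) ℂ :=
  !![((-1/2)), ((-1/4) + (-1/4)*X), ((1/2));
    ((1/2)), ((-1/4) + (-1/4)*X), ((-1/2));
    ((1/4) + (-1/4)*X), ((0)), ((1/4) + (-1/4)*X)]

def A7 : Matrix (Fin 3) (Fin 3) ℂ :=
  !![((-1)), ((0)), ((0));
    ((0)), ((-1)), ((0));
    ((0)), ((0)), ((-1))]

lemma hM : r1 * r2 * r3 = A1 := by
  ext i j
  fin_cases i <;> fin_cases j <;>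
    simp [r1, r2, r3, A1, X, Kalpha, Kalphabar, Matrix.mul_apply, Fin.sum_univ_succ] <;>
    ring

lemma hA2 : A1 * A1 = A2 := by
  ext i j
  fin_cases i <;> fin_cases j <;>
    simp [A1, A1, A2, Matrix.mul_apply, Fin.sum_univ_succ, Matrix.vecHead, Matrix.vecTail]
  · first | linear_combination ((0) : ℂ) * hX | rfl
  · first | linear_combination ((0) : ℂ) * hX | rfl
  · first | linear_combination ((1/16) : ℂ) * hX | rfl
  · first | linear_combination ((1/16) : ℂ) * hX | rfl
  · first | linear_combination ((1/16) : ℂ) * hX | rfl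
  · first | linear_combination ((1/16) : ℂ) * hX | rfl
  · first | linear_combination ((0) : ℂ) * hX | rfl
  · first | linear_combination ((0) : ℂ) * hX | rfl
  · first | linear_combination ((1/16) : ℂ) * hX | rfl

lemma hA3 : A2 * A1 = A3 := by
  ext i j
  fin_cases i <;> fin_cases j <;>
    simp [A2, A1, A3, Matrix.mul_apply, Fin.sum_univ_succ, Matrix.vecHead, Matrix.vecTail]
  · first | linear_combination ((0) : ℂ) * hX | rfl
  · first | linear_combination ((0) : ℂ) * hX | rfl
  · first | linear_combination ((-1/16) : ℂ) * hX | rfl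
  · first | linear_combination ((0) : ℂ) * hX | rfl
  · first | linear_combination ((0) : ℂ) * hX | rfl
  · first | linear_combination ((1/16) : ℂ) * hX | rfl
  · first | linear_combination ((1/16) : ℂ) * hX | rfl
  · first | linear_combination ((1/16) : ℂ) * hX | rfl
  · first | linear_combination ((-1/16) : ℂ) * hX | rfl

lemma hA4 : A3 * A1 = A4 := by
  ext i j
  fin_cases i <;> fin_cases j <;>
    simp [A3, A1, A4, Matrix.mul_apply, Fin.sum_univ_succ, Matrix.vecHead, Matrix.vecTail]
  · first | linear_combination ((0) : ℂ) * hX | rfl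
  · first | linear_combination ((0) : ℂ) * hX | rfl
  · first | linear_combination ((-1/16) : ℂ) * hX | rfl
  · first | linear_combination ((-1/16) : ℂ) * hX | rfl
  · first | linear_combination ((-1/16) : ℂ) * hX | rfl
  · first | linear_combination ((-1/16) : ℂ) * hX | rfl
  · first | linear_combination ((0) : ℂ) * hX | rfl
  · first | linear_combination ((0) : ℂ) * hX | rfl
  · first | linear_combination ((1/16) : ℂ) * hX | rfl

lemma hA5 : A4 * A1 = A5 := by
  ext i j
  fin_cases i <;> fin_cases j <;>
    simp [A4, A1, A5, Matrix.mul_apply, Fin.sum_univ_succ, Matrix.vecHead, Matrix.vecTail]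
  · first | linear_combination ((0) : ℂ) * hX | rfl
  · first | linear_combination ((0) : ℂ) * hX | rfl
  · first | linear_combination ((0) : ℂ) * hX | rfl
  · first | linear_combination ((-1/16) : ℂ) * hX | rfl
  · first | linear_combination ((-1/16) : ℂ) * hX | rfl
  · first | linear_combination ((0) : ℂ) * hX | rfl
  · first | linear_combination ((-1/16) : ℂ) * hX | rfl
  · first | linear_combination ((-1/16) : ℂ) * hX | rfl
  · first | linear_combination ((0) : ℂ) * hX | rfl

lemma hA6 : A5 * A1 = A6 := by
  ext i j
  fin_cases i <;> fin_cases j <;>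
    simp [A5, A1, A6, Matrix.mul_apply, Fin.sum_univ_succ, Matrix.vecHead, Matrix.vecTail]
  · first | linear_combination ((1/16) : ℂ) * hX | rfl
  · first | linear_combination ((1/16) : ℂ) * hX | rfl
  · first | linear_combination ((-1/16) : ℂ) * hX | rfl
  · first | linear_combination ((0) : ℂ) * hX | rfl
  · first | linear_combination ((0) : ℂ) * hX | rfl
  · first | linear_combination ((1/16) : ℂ) * hX | rfl
  · first | linear_combination ((0) : ℂ) * hX | rfl
  · first | linear_combination ((0) : ℂ) * hX | rfl
  · first | linear_combination ((-1/16) : ℂ) * hX | rfl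

lemma hA7 : A6 * A1 = A7 := by
  ext i j
  fin_cases i <;> fin_cases j <;>
    simp [A6, A1, A7, Matrix.mul_apply, Fin.sum_univ_succ, Matrix.vecHead, Matrix.vecTail]
  · first | linear_combination ((1/16) : ℂ) * hX | rfl
  · first | linear_combination ((1/16) : ℂ) * hX | rfl
  · first | linear_combination ((0) : ℂ) * hX | rfl
  · first | linear_combination ((1/16) : ℂ) * hX | rfl
  · first | linear_combination ((1/16) : ℂ) * hX | rfl
  · first | linear_combination ((0) : ℂ) * hX | rfl
  · first | linear_combination ((0) : ℂ) * hX | rfl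
  · first | linear_combination ((0) : ℂ) * hX | rfl
  · first | linear_combination ((1/8) : ℂ) * hX | rfl

lemma hA7' : A7 = -1 := by
  ext i j
  fin_cases i <;> fin_cases j <;> simp [A7, Matrix.vecHead, Matrix.vecTail, Matrix.one_apply] <;> norm_num

lemma key7 : (r1 * r2 * r3) ^ 7 = -1 := by
  rw [hM, show (A1 : Matrix (Fin 3) (Fin 3) ℂ) ^ 7 =
    (((((A1 * A1) * A1) * A1) * A1) * A1) * A1 by
      rw [pow_succ, pow_succ, pow_succ, pow_succ, pow_succ, pow_succ, pow_one],
    hA2, hA3, hA4, hA5, hA6, hA7, hA7']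

lemma key2 : (r1 * r2 * r3) ^ 2 = A2 := by
  rw [hM, sq, hA2]

/-- `(r₁r₂r₃)⁷ = -id`, so `r₁r₂r₃` has order `14`. -/
theorem coxeter_element_order_fourteen :
    (r1 * r2 * r3) ^ 7 = -1 ∧ orderOf (r1 * r2 * r3) = 14 := by
  refine ⟨key7, ?_⟩
  have h14 : (r1 * r2 * r3) ^ 14 = 1 := by
    rw [show (14 : ℕ) = 7 * 2 by norm_num, pow_mul, key7]
    simp
  refine orderOf_eq_of_pow_and_pow_div_prime (by norm_num) h14 ?_
  intro p hp hdvd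
  have hle : p ≤ 14 := Nat.le_of_dvd (by norm_num) hdvd
  have h2 : 2 ≤ p := hp.two_le
  have hp27 : p = 2 ∨ p = 7 := by
    interval_cases p <;> first | omega | (exfalso; revert hp; norm_num)
  rcases hp27 with rfl | rfl
  · intro h
    norm_num at h
    rw [key7] at h
    have h00 := congrFun (congrFun h 0) 0
    simp [Matrix.one_apply] at h00
    exact absurd h00.symm (by norm_num)
  · intro h
    norm_num at h
    rw [key2] at h
    have h01 := congrFun (congrFun h 0) 1
    simp [A2, Matrix.one_apply, X] at h01

end
end
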